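/- Suppose a, b, c : (0,∞) → ℝ are Borel measurable and there exists a set N ⊆ (0,∞)² of two-dimensional Lebesgue measure zero such that a(x) + b(y) = c(x+y) for all (x,y) ∈ (0,∞)² \ N. Then there exist real constants λ, α, β such that a(x) = λx + α, b(x) = λx + β, and c(x) = λx + α + β for Lebesgue-almost all x ∈ (0,∞). -/

import Mathlib

open MeasureTheory Set Filter Topology

/-- preimage of a null set under translation is null -/
lemma null_preimage_add_right (Z : Set ℝ) (hZ : volume Z = 0) (d : ℝ) :
    volume ((fun u => u + d) ⁻¹' Z) = 0 :=
  (measurePreserving_add_right volume d).quasiMeasurePreserving.preimage_null hZ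

lemma null_preimage_add_left (Z : Set ℝ) (hZ : volume Z = 0) (d : ℝ) :
    volume ((fun u => d + u) ⁻¹' Z) = 0 :=
  (measurePreserving_add_left volume d).quasiMeasurePreserving.preimage_null hZ

lemma null_preimage_sub_left (Z : Set ℝ) (hZ : volume Z = 0) (s : ℝ) :
    volume ((fun u => s - u) ⁻¹' Z) = 0 :=
  (Measure.measurePreserving_sub_left volume s).quasiMeasurePreserving.preimage_null hZ

/-- pick a point in an interval avoiding a null set -/
lemma pick_avoid (A B : ℝ) (hAB : A < B) (Z : Set ℝ) (hZ : volume Z = 0) :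
    ∃ x, A < x ∧ x < B ∧ x ∉ Z := by
  have h1 : volume (Ioo A B \ Z) = volume (Ioo A B) := measure_diff_null hZ
  have h2 : volume (Ioo A B) ≠ 0 := by
    rw [Real.volume_Ioo]
    simp [ENNReal.ofReal_eq_zero, sub_pos.2 hAB, not_le.2 (sub_pos.2 hAB)]
  have h3 : (Ioo A B \ Z).Nonempty := by
    apply nonempty_of_measure_ne_zero (μ := volume); rw [h1]; exact h2
  obtain ⟨x, hx1, hx2⟩ := h3
  exact ⟨x, hx1.1, hx1.2, hx2⟩

lemma phi_smul (φ : ℝ → ℝ)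
    (hadd : ∀ d e : ℝ, 0 < d → 0 < e → φ (d + e) = φ d + φ e) :
    ∀ n : ℕ, ∀ s : ℝ, 0 < s → φ ((n + 1) * s) = (n + 1) * φ s := by
  intro n
  induction n with
  | zero => intro s hs; simp
  | succ k ih =>
      intro s hs
      push_cast
      have h1 : ((k : ℝ) + 1 + 1) * s = ((k : ℝ) + 1) * s + s := by ring
      rw [h1, hadd _ _ (by positivity) hs]
      have h2 := ih s hs
      push_cast at h2
      rw [h2]; ring

lemma phi_bounded (φ g : ℝ → ℝ) (hg : Measurable g)
    (hadd : ∀ d e : ℝ, 0 < d → 0 < e → φ (d + e) = φ d + φ e)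
    (hae : ∀ᵐ d : ℝ ∂volume, 0 < d → φ d = g d) :
    ∃ K : ℝ, 0 ≤ K ∧ ∀ t : ℝ, 0 < t → t ≤ 1 → |φ t| ≤ K := by
  -- the null set where φ ≠ g
  set Z : Set ℝ := {d | 0 < d ∧ φ d ≠ g d} with hZdef
  have hZ : volume Z = 0 := by
    rw [ae_iff] at hae
    convert hae using 2
    ext x; simp [hZdef, Classical.not_imp]
  -- a set of large measure where g is bounded
  set B : ℕ → Set ℝ := fun n => {x : ℝ | x ∈ Ioo (0:ℝ) 4 ∧ |g x| ≤ n} with hBdef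
  have hBmeas : ∀ n, MeasurableSet (B n) := fun n =>
    (measurableSet_Ioo).inter ((hg.abs) measurableSet_Iic)
  have hBmono : Monotone B := by
    intro i j hij x hx
    exact ⟨hx.1, hx.2.trans (by exact_mod_cast Nat.cast_le.2 hij)⟩
  have hBunion : ⋃ n, B n = Ioo (0:ℝ) 4 := by
    apply subset_antisymm
    · exact iUnion_subset fun n x hx => hx.1
    · intro x hx
      obtain ⟨n, hn⟩ := exists_nat_ge |g x|
      exact mem_iUnion.2 ⟨n, hx, hn⟩
  have hlim : Tendsto (fun n => volume (B n)) atTop (𝓝 (volume (Ioo (0:ℝ) 4))) := by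
    have h := tendsto_measure_iUnion_atTop (μ := volume) hBmono
    rw [hBunion] at h
    exact h
  have h34 : (ENNReal.ofReal 3) < volume (Ioo (0:ℝ) 4) := by
    rw [Real.volume_Ioo]
    exact ENNReal.ofReal_lt_ofReal_iff (by norm_num) |>.2 (by norm_num)
  have hev : ∀ᶠ n in atTop, ENNReal.ofReal 3 < volume (B n) :=
    hlim.eventually (eventually_gt_nhds h34)
  obtain ⟨n, hn⟩ := hev.exists
  refine ⟨2 * n, by positivity, fun t ht ht1 => ?_⟩
  set A := B n with hA
  set pre := (fun x : ℝ => x + t) ⁻¹' A with hpre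
  have hpreμ : volume pre = volume A :=
    (measurePreserving_add_right volume t).measure_preimage (hBmeas n).nullMeasurableSet
  have hsub : A ∪ pre ⊆ Ioo (-1 : ℝ) 4 := by
    rintro x (hx | hx)
    · exact ⟨by linarith [hx.1.1], hx.1.2⟩
    · have h1 : 0 < x + t := hx.1.1
      have h2 : x + t < 4 := hx.1.2
      constructor <;> linarith
  have hkey : ENNReal.ofReal 6 ≤ ENNReal.ofReal 5 + volume (A ∩ pre) := by
    have h1 : volume (A ∪ pre) + volume (A ∩ pre) = volume A + volume pre :=
      measure_union_add_inter A ((hBmeas n).preimage (measurable_add_const t))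
    have h2 : volume (A ∪ pre) ≤ ENNReal.ofReal 5 := by
      refine le_trans (measure_mono hsub) ?_
      rw [Real.volume_Ioo]
      exact ENNReal.ofReal_le_ofReal (by norm_num)
    have h3 : ENNReal.ofReal 6 ≤ volume A + volume pre := by
      rw [hpreμ]
      calc ENNReal.ofReal 6 = ENNReal.ofReal 3 + ENNReal.ofReal 3 := by
              rw [← ENNReal.ofReal_add] <;> norm_num
        _ ≤ volume A + volume A := add_le_add hn.le hn.le
    calc ENNReal.ofReal 6 ≤ volume A + volume pre := h3
      _ = volume (A ∪ pre) + volume (A ∩ pre) := h1.symm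
      _ ≤ ENNReal.ofReal 5 + volume (A ∩ pre) := add_le_add h2 le_rfl
  have hpos : volume (A ∩ pre) ≠ 0 := by
    intro h0
    rw [h0, add_zero] at hkey
    have := ENNReal.ofReal_le_ofReal_iff (by norm_num : (5:ℝ) ≥ 0) |>.1 hkey
    norm_num at this
  -- remove the null sets
  have hZt : volume ((fun x : ℝ => x + t) ⁻¹' Z) = 0 :=
    (measurePreserving_add_right volume t).quasiMeasurePreserving.preimage_null hZ
  have hdiff : volume ((A ∩ pre) \ (Z ∪ (fun x : ℝ => x + t) ⁻¹' Z)) ≠ 0 := by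
    rwa [measure_diff_null (by rw [measure_union_null_iff]; exact ⟨hZ, hZt⟩)]
  obtain ⟨x, hx⟩ := nonempty_of_measure_ne_zero hdiff
  obtain ⟨⟨hxA, hxpre⟩, hxZ⟩ := hx
  have hx0 : 0 < x := hxA.1.1
  have hxZ1 : x ∉ Z := fun h => hxZ (Or.inl h)
  have hxZ2 : x + t ∉ Z := fun h => hxZ (Or.inr h)
  have e1 : φ x = g x := by
    by_contra h; exact hxZ1 ⟨hx0, h⟩
  have e2 : φ (x + t) = g (x + t) := by
    by_contra h; exact hxZ2 ⟨by linarith, h⟩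
  have e3 : φ (x + t) = φ x + φ t := hadd x t hx0 ht
  have : φ t = g (x + t) - g x := by rw [← e1, ← e2, e3]; ring
  rw [this]
  have b1 : |g x| ≤ n := hxA.2
  have b2 : |g (x + t)| ≤ n := hxpre.2
  calc |g (x + t) - g x| ≤ |g (x + t)| + |g x| := abs_sub _ _
    _ ≤ 2 * n := by linarith

lemma phi_linear (φ g : ℝ → ℝ) (hg : Measurable g)
    (hadd : ∀ d e : ℝ, 0 < d → 0 < e → φ (d + e) = φ d + φ e)
    (hae : ∀ᵐ d : ℝ ∂volume, 0 < d → φ d = g d) :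
    ∃ lam : ℝ, ∀ d : ℝ, 0 < d → φ d = lam * d := by
  obtain ⟨K, hK0, hK⟩ := phi_bounded φ g hg hadd hae
  set lam := φ 1 with hlam
  refine ⟨lam, fun t ht => ?_⟩
  -- key estimate: for every n ≥ 1 (as ℕ, using n+1), |φ t - lam * t| ≤ (|lam| + K)/(n+1)
  have key : ∀ n : ℕ, |φ t - lam * t| ≤ (|lam| + K) / (n + 1) := by
    intro n
    set N : ℝ := (n : ℝ) + 1 with hN
    have hNpos : (0:ℝ) < N := by positivity
    -- φ (1/N) = lam / N
    have hone : φ (N * (1 / N)) = N * φ (1 / N) := phi_smul φ hadd n (1/N) (by positivity)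
    have hone' : φ 1 = N * φ (1 / N) := by
      rw [← hone]; congr 1; field_simp
    -- m = ⌊N t⌋ + 1
    set m : ℕ := ⌊N * t⌋₊ + 1 with hm
    have hm1 : N * t < m := by
      have := Nat.lt_floor_add_one (N * t)
      rw [hm]; push_cast; push_cast at this; linarith
    have hm2 : (m : ℝ) ≤ N * t + 1 := by
      have := Nat.floor_le (le_of_lt (by positivity : (0:ℝ) < N * t))
      rw [hm]; push_cast; linarith
    set r : ℝ := (m : ℝ) / N with hr
    have hrt : t < r := by rw [hr]; rw [lt_div_iff₀ hNpos]; linarith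
    have hN0 : N ≠ 0 := ne_of_gt hNpos
    have hrt2 : r - t ≤ 1 / N := by
      rw [sub_le_iff_le_add, hr, div_le_iff₀ hNpos]
      have he : (1 / N + t) * N = 1 + N * t := by field_simp
      rw [he]; linarith
    -- φ r = r * lam
    have hphir : φ r = r * lam := by
      have h1 : φ ((((m - 1 : ℕ)) + 1 : ℝ) * (1 / N)) = (((m - 1 : ℕ)) + 1 : ℝ) * φ (1 / N) :=
        phi_smul φ hadd (m - 1) (1 / N) (by positivity)
      have hm0 : ((m - 1 : ℕ) : ℝ) + 1 = (m : ℝ) := by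
        rw [hm]; push_cast [Nat.add_sub_cancel]; ring
      rw [hm0] at h1
      have : r = (m : ℝ) * (1 / N) := by rw [hr]; ring
      rw [this, h1, hlam, hone']
      field_simp
    -- φ r = φ t + φ (r - t)
    have hsplit : φ r = φ t + φ (r - t) := by
      have : r = t + (r - t) := by ring
      rw [this, hadd t (r - t) ht (by linarith)]
      ring_nf
    -- bound φ (r - t): N * (r - t) ∈ (0, 1]
    have hbnd : |φ (r - t)| ≤ K / N := by
      have h1 : φ (N * (r - t)) = N * φ (r - t) := by
        have := phi_smul φ hadd n (r - t) (by linarith)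
        rwa [← hN] at this
      have h2 : 0 < N * (r - t) := by
        apply mul_pos hNpos; linarith
      have h3 : N * (r - t) ≤ 1 := by
        calc N * (r - t) ≤ N * (1 / N) := by
              apply mul_le_mul_of_nonneg_left hrt2 (le_of_lt hNpos)
          _ = 1 := by field_simp
      have h4 := hK _ h2 h3
      rw [h1, abs_mul, abs_of_pos hNpos] at h4
      rw [le_div_iff₀ hNpos]
      linarith [abs_nonneg (φ (r - t))]
    -- combine
    have : φ t - lam * t = lam * (r - t) - φ (r - t) := by
      have := hsplit
      rw [hphir] at this
      linarith [this]
    rw [this]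
    have : |lam * (r - t) - φ (r - t)| ≤ |lam| * (r - t) + K / N := by
      calc |lam * (r - t) - φ (r - t)| ≤ |lam * (r - t)| + |φ (r - t)| := abs_sub _ _
        _ ≤ |lam| * (r - t) + K / N := by
            rw [abs_mul, abs_of_pos (by linarith : (0:ℝ) < r - t)]
            exact add_le_add le_rfl hbnd
    refine le_trans this ?_
    have : |lam| * (r - t) ≤ |lam| / N := by
      calc |lam| * (r - t) ≤ |lam| * (1 / N) := by
            apply mul_le_mul_of_nonneg_left hrt2 (abs_nonneg _)
        _ = |lam| / N := by ring
    rw [hN, add_div]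
    linarith
  -- conclude
  by_contra hne
  have habs : 0 < |φ t - lam * t| := by
    apply abs_pos.2
    intro h; apply hne; linarith [sub_eq_zero.1 h]
  obtain ⟨n, hn⟩ := exists_nat_gt ((|lam| + K) / |φ t - lam * t|)
  have hnn : (|lam| + K) / ((n : ℝ) + 1) < |φ t - lam * t| := by
    rw [div_lt_iff₀ (by positivity)]
    have h2 : (|lam| + K) / |φ t - lam * t| < (n : ℝ) + 1 := by linarith
    rw [div_lt_iff₀ habs] at h2
    linarith
  exact absurd (key n) (not_le.2 hnn)

/-- from null X (equation at s) and Y (equation at s+d), b-differences are constant -/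
lemma keydiff_b (a b c : ℝ → ℝ) (d s : ℝ) (hs : 0 < s)
    (hP : volume {x : ℝ | 0 < x ∧ x < s ∧ a x + b (s - x) ≠ c s} = 0)
    (hP' : volume {x : ℝ | 0 < x ∧ x < s + d ∧ a x + b (s + d - x) ≠ c (s + d)} = 0)
    (hd : 0 < d) :
    volume {u : ℝ | 0 < u ∧ u < s ∧ b (u + d) - b u ≠ c (s + d) - c s} = 0 := by
  set X := {x : ℝ | 0 < x ∧ x < s ∧ a x + b (s - x) ≠ c s} with hX
  set Y := {x : ℝ | 0 < x ∧ x < s + d ∧ a x + b (s + d - x) ≠ c (s + d)} with hY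
  have hR1 : volume ((fun u : ℝ => s - u) ⁻¹' X) = 0 := null_preimage_sub_left X hP s
  have hR2 : volume ((fun u : ℝ => s - u) ⁻¹' Y) = 0 := null_preimage_sub_left Y hP' s
  refine measure_mono_null ?_ (measure_union_null hR1 hR2)
  · intro u hu
    obtain ⟨hu0, hus, hne⟩ := hu
    by_contra hcon
    simp only [mem_union, not_or] at hcon
    obtain ⟨h1, h2⟩ := hcon
    simp only [mem_preimage, hX, hY, mem_setOf_eq, not_and_or] at h1 h2
    have e1 : a (s - u) + b (s - (s - u)) = c s := by
      rcases h1 with h | h | h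
      · exact absurd (by linarith : 0 < s - u) h
      · exact absurd (by linarith : s - u < s) h
      · exact not_not.1 h
    have e2 : a (s - u) + b (s + d - (s - u)) = c (s + d) := by
      rcases h2 with h | h | h
      · exact absurd (by linarith : 0 < s - u) h
      · exact absurd (by linarith : s - u < s + d) h
      · exact not_not.1 h
    have r1 : s - (s - u) = u := by ring
    have r2 : s + d - (s - u) = u + d := by ring
    rw [r1] at e1
    rw [r2] at e2
    apply hne
    linarith

lemma keydiff_a (a b c : ℝ → ℝ) (d s : ℝ) (hs : 0 < s)
    (hP : volume {x : ℝ | 0 < x ∧ x < s ∧ a x + b (s - x) ≠ c s} = 0)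
    (hP' : volume {x : ℝ | 0 < x ∧ x < s + d ∧ a x + b (s + d - x) ≠ c (s + d)} = 0)
    (hd : 0 < d) :
    volume {x : ℝ | 0 < x ∧ x < s ∧ a (x + d) - a x ≠ c (s + d) - c s} = 0 := by
  set X := {x : ℝ | 0 < x ∧ x < s ∧ a x + b (s - x) ≠ c s} with hX
  set Y := {x : ℝ | 0 < x ∧ x < s + d ∧ a x + b (s + d - x) ≠ c (s + d)} with hY
  have hR2 : volume ((fun x : ℝ => x + d) ⁻¹' Y) = 0 := null_preimage_add_right Y hP' d
  refine measure_mono_null ?_ (measure_union_null hP hR2)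
  · intro x hx
    obtain ⟨hx0, hxs, hne⟩ := hx
    by_contra hcon
    simp only [mem_union, not_or] at hcon
    obtain ⟨h1, h2⟩ := hcon
    simp only [mem_preimage, hX, hY, mem_setOf_eq, not_and_or] at h1 h2
    have e1 : a x + b (s - x) = c s := by
      rcases h1 with h | h | h
      · exact absurd hx0 h
      · exact absurd hxs h
      · exact not_not.1 h
    have e2 : a (x + d) + b (s + d - (x + d)) = c (s + d) := by
      rcases h2 with h | h | h
      · exact absurd (by linarith : 0 < x + d) h
      · exact absurd (by linarith : x + d < s + d) h
      · exact not_not.1 h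
    have r2 : s + d - (x + d) = s - x := by ring
    rw [r2] at e2
    apply hne
    linarith

lemma good_ae (a b c : ℝ → ℝ) (N : Set (ℝ × ℝ)) (hN0 : volume N = 0)
    (heq : ∀ x y : ℝ, 0 < x → 0 < y → (x, y) ∉ N → a x + b y = c (x + y)) :
    ∀ᵐ s : ℝ ∂volume, volume {x : ℝ | 0 < x ∧ x < s ∧ a x + b (s - x) ≠ c s} = 0 := by
  set Eset : Set (ℝ × ℝ) := {p | 0 < p.1 ∧ 0 < p.2 ∧ a p.1 + b p.2 ≠ c (p.1 + p.2)} with hEdef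
  have hE : volume Eset = 0 := by
    apply measure_mono_null _ hN0
    rintro ⟨x, y⟩ ⟨hx, hy, hne⟩
    by_contra hxy
    exact hne (heq x y hx hy hxy)
  -- shear: (s, x) ↦ (x, s - x) is measure-preserving ℝ² → ℝ²
  have hmp : MeasurePreserving (fun z : ℝ × ℝ => (z.2, z.1 - z.2))
      (volume.prod volume) (volume.prod volume) :=
    measurePreserving_prod_sub_swap volume volume
  have hE' : volume.prod volume Eset = 0 := by
    rw [← MeasureTheory.Measure.volume_eq_prod]; exact hE
  set W : Set (ℝ × ℝ) := (fun z : ℝ × ℝ => (z.2, z.1 - z.2)) ⁻¹' Eset with hWdef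
  have hW : volume.prod volume W = 0 :=
    hmp.quasiMeasurePreserving.preimage_null hE'
  have hslice := MeasureTheory.Measure.measure_ae_null_of_prod_null hW
  rw [EventuallyEq] at hslice
  filter_upwards [hslice] with s hs
  have hset : {x : ℝ | 0 < x ∧ x < s ∧ a x + b (s - x) ≠ c s} = Prod.mk s ⁻¹' W := by
    ext x
    simp only [mem_setOf_eq, mem_preimage, hWdef, hEdef, mem_setOf_eq]
    constructor
    · rintro ⟨h1, h2, h3⟩
      refine ⟨h1, by linarith, ?_⟩
      have : x + (s - x) = s := by ring
      rw [this]; exact h3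
    · rintro ⟨h1, h2, h3⟩
      refine ⟨h1, by linarith, ?_⟩
      have : x + (s - x) = s := by ring
      rw [this] at h3; exact h3
  rw [hset]
  exact hs

lemma affine_of_diff (b : ℝ → ℝ) (hb : Measurable b) (lam : ℝ)
    (H : ∀ d : ℝ, 0 < d → volume {u : ℝ | 0 < u ∧ b (u + d) ≠ b u + lam * d} = 0) :
    ∃ β : ℝ, ∀ᵐ t : ℝ ∂volume, 0 < t → b t = lam * t + β := by
  -- joint null set
  set Wb : Set (ℝ × ℝ) :=
    ((Ioi (0:ℝ)) ×ˢ (Ioi (0:ℝ))) ∩ {p : ℝ × ℝ | b (p.2 + p.1) ≠ b p.2 + lam * p.1} with hWbdef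
  have hf1 : Measurable fun p : ℝ × ℝ => b (p.2 + p.1) := hb.comp (measurable_snd.add measurable_fst)
  have hf2 : Measurable fun p : ℝ × ℝ => b p.2 + lam * p.1 :=
    (hb.comp measurable_snd).add (measurable_fst.const_mul lam)
  have hWbm : MeasurableSet Wb :=
    (measurableSet_Ioi.prod measurableSet_Ioi).inter (measurableSet_eq_fun hf1 hf2).compl
  have hprod : volume.prod volume Wb = 0 := by
    rw [Measure.measure_prod_null hWbm]
    apply Filter.Eventually.of_forall
    intro d
    by_cases hd : 0 < d
    · apply measure_mono_null _ (H d hd)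
      intro u hu
      exact ⟨hu.1.2, hu.2⟩
    · apply measure_mono_null _ (measure_empty (μ := volume) (α := ℝ))
      intro u hu
      exact absurd hu.1.1 hd
  have hswap : volume.prod volume (Prod.swap ⁻¹' Wb) = 0 :=
    Measure.measurePreserving_swap.quasiMeasurePreserving.preimage_null hprod
  have hae2 := Measure.measure_ae_null_of_prod_null hswap
  rw [EventuallyEq] at hae2
  have hQ : ∀ᵐ u : ℝ ∂volume, 0 < u →
      volume {d : ℝ | 0 < d ∧ b (u + d) ≠ b u + lam * d} = 0 := by
    filter_upwards [hae2] with u hu hupos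
    have hset : {d : ℝ | 0 < d ∧ b (u + d) ≠ b u + lam * d} =
        Prod.mk u ⁻¹' (Prod.swap ⁻¹' Wb) := by
      ext d
      simp only [mem_setOf_eq, mem_preimage, Prod.swap_prod_mk, hWbdef, mem_inter_iff,
        mem_prod, mem_Ioi]
      constructor
      · rintro ⟨h1, h2⟩; exact ⟨⟨h1, hupos⟩, h2⟩
      · rintro ⟨⟨h1, _⟩, h2⟩; exact ⟨h1, h2⟩
    rw [hset]
    exact hu
  -- translate: for good u, b is affine beyond u
  have haffu : ∀ u : ℝ, 0 < u →
      volume {d : ℝ | 0 < d ∧ b (u + d) ≠ b u + lam * d} = 0 →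
      volume {t : ℝ | u < t ∧ b t ≠ lam * t + (b u - lam * u)} = 0 := by
    intro u hu hnull
    apply measure_mono_null _ (null_preimage_add_right _ hnull (-u))
    intro t ht
    obtain ⟨ht1, ht2⟩ := ht
    refine ⟨by simp; linarith, ?_⟩
    have hr : u + (t + -u) = t := by ring
    rw [hr]
    intro hcon
    apply ht2
    have : lam * (t + -u) = lam * t - lam * u := by ring
    rw [this] at hcon
    linarith
  -- pick points close to 0
  have hZQ : volume {u : ℝ | ¬ (0 < u →
      volume {d : ℝ | 0 < d ∧ b (u + d) ≠ b u + lam * d} = 0)} = 0 := by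
    rw [← ae_iff]; exact hQ
  have hUex : ∀ n : ℕ, ∃ u : ℝ, 0 < u ∧ u < 1 / ((n : ℝ) + 1) ∧
      volume {d : ℝ | 0 < d ∧ b (u + d) ≠ b u + lam * d} = 0 := by
    intro n
    obtain ⟨u, h1, h2, h3⟩ := pick_avoid 0 (1 / ((n : ℝ) + 1)) (by positivity) _ hZQ
    refine ⟨u, h1, h2, ?_⟩
    by_contra hcon
    exact h3 (fun h => absurd (h h1) hcon)
  choose U hU1 hU2 hU3 using hUex
  have hBn : ∀ n : ℕ,
      volume {t : ℝ | U n < t ∧ b t ≠ lam * t + (b (U n) - lam * U n)} = 0 :=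
    fun n => haffu (U n) (hU1 n) (hU3 n)
  set β := b (U 0) - lam * U 0 with hβ
  have hβn : ∀ n : ℕ, b (U n) - lam * U n = β := by
    intro n
    set M := max (U n) (U 0) with hM
    obtain ⟨t, ht1, _, ht3⟩ := pick_avoid M (M + 1) (by linarith) _
      (measure_union_null (hBn n) (hBn 0))
    simp only [mem_union, not_or, mem_setOf_eq, not_and_or] at ht3
    obtain ⟨e1, e2⟩ := ht3
    have htn : U n < t := lt_of_le_of_lt (le_max_left _ _) ht1
    have ht0 : U 0 < t := lt_of_le_of_lt (le_max_right _ _) ht1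
    have q1 : b t = lam * t + (b (U n) - lam * U n) := by
      rcases e1 with h | h
      · exact absurd htn h
      · exact not_not.1 h
    have q2 : b t = lam * t + (b (U 0) - lam * U 0) := by
      rcases e2 with h | h
      · exact absurd ht0 h
      · exact not_not.1 h
    rw [hβ]; linarith
  refine ⟨β, ?_⟩
  rw [ae_iff]
  apply measure_mono_null _ (measure_iUnion_null (fun n : ℕ =>
    hBn n))
  intro t ht
  simp only [mem_setOf_eq, Classical.not_imp] at ht
  obtain ⟨ht0, htne⟩ := ht
  obtain ⟨n, hn⟩ := exists_nat_gt (1 / t)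
  have hnt : 1 / ((n : ℝ) + 1) < t := by
    rw [div_lt_iff₀ (by positivity)]
    have h2 : 1 / t < (n : ℝ) + 1 := by linarith
    rw [div_lt_iff₀ ht0] at h2
    linarith
  refine mem_iUnion.2 ⟨n, lt_trans (hU2 n) hnt, ?_⟩
  rw [hβn n]
  exact htne

theorem stmt_3 (a b c : ℝ → ℝ)
    (ha : Measurable a) (hb : Measurable b) (hc : Measurable c)
    (N : Set (ℝ × ℝ)) (hN0 : volume N = 0)
    (heq : ∀ x y : ℝ, 0 < x → 0 < y → (x, y) ∉ N → a x + b y = c (x + y)) :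
    ∃ lam α β : ℝ, ∀ᵐ x : ℝ ∂volume, x ∈ Ioi (0 : ℝ) →
      a x = lam * x + α ∧ b x = lam * x + β ∧ c x = lam * x + α + β := by
  set P : ℝ → Prop :=
    fun s => volume {x : ℝ | 0 < x ∧ x < s ∧ a x + b (s - x) ≠ c s} = 0 with hPdef
  have hGood : ∀ᵐ s : ℝ ∂volume, P s := good_ae a b c N hN0 heq
  have hZ0 : volume {s : ℝ | ¬ P s} = 0 := by rw [← ae_iff]; exact hGood
  -- pick good points
  have hpick : ∀ M d : ℝ, 0 < d → ∃ s, M < s ∧ 0 < s ∧ P s ∧ P (s + d) := by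
    intro M d hd
    have hZ1 : volume ((fun s : ℝ => s + d) ⁻¹' {s : ℝ | ¬ P s}) = 0 :=
      null_preimage_add_right _ hZ0 d
    obtain ⟨s, h1, _, h3⟩ := pick_avoid (max M 0) (max M 0 + 1) (by linarith)
      ({s : ℝ | ¬ P s} ∪ (fun s : ℝ => s + d) ⁻¹' {s : ℝ | ¬ P s})
      (measure_union_null hZ0 hZ1)
    simp only [mem_union, not_or, mem_preimage, mem_setOf_eq, not_not] at h3
    exact ⟨s, lt_of_le_of_lt (le_max_left M 0) h1,
      lt_of_le_of_lt (le_max_right M 0) h1, h3.1, h3.2⟩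
  -- the difference constants are well-defined
  have hconsts : ∀ d s s' : ℝ, 0 < d → 0 < s → 0 < s' → P s → P (s + d) → P s' → P (s' + d) →
      c (s + d) - c s = c (s' + d) - c s' := by
    intro d s s' hd hs hs' h1 h2 h3 h4
    have V1 := keydiff_b a b c d s hs h1 h2 hd
    have V2 := keydiff_b a b c d s' hs' h3 h4 hd
    obtain ⟨u, hu1, hu2, hu3⟩ := pick_avoid 0 (min s s') (lt_min hs hs') _
      (measure_union_null V1 V2)
    simp only [mem_union, not_or, mem_setOf_eq, not_and_or] at hu3
    obtain ⟨e1, e2⟩ := hu3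
    have q1 : b (u + d) - b u = c (s + d) - c s := by
      rcases e1 with h | h | h
      · exact absurd hu1 h
      · exact absurd (lt_of_lt_of_le hu2 (min_le_left _ _)) h
      · exact not_not.1 h
    have q2 : b (u + d) - b u = c (s' + d) - c s' := by
      rcases e2 with h | h | h
      · exact absurd hu1 h
      · exact absurd (lt_of_lt_of_le hu2 (min_le_right _ _)) h
      · exact not_not.1 h
    linarith
  -- define φ
  choose S hS1 hS2 hS3 hS4 using fun (d : ℝ) (hd : 0 < d) => hpick 1 d hd
  set φ : ℝ → ℝ := fun d => if hd : 0 < d then c (S d hd + d) - c (S d hd) else 0 with hφdef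
  have hφeq : ∀ d s : ℝ, 0 < d → 0 < s → P s → P (s + d) → φ d = c (s + d) - c s := by
    intro d s hd hs hPs hPsd
    have : φ d = c (S d hd + d) - c (S d hd) := by
      simp only [hφdef, dif_pos hd]
    rw [this]
    exact hconsts d (S d hd) s hd (hS2 d hd) hs (hS3 d hd) (hS4 d hd) hPs hPsd
  -- difference relations for b and a
  have hbdiff : ∀ d : ℝ, 0 < d → volume {u : ℝ | 0 < u ∧ b (u + d) ≠ b u + φ d} = 0 := by
    intro d hd
    choose T hT1 hT2 hT3 hT4 using fun n : ℕ => hpick (n : ℝ) d hd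
    have hVn : ∀ n : ℕ,
        volume {u : ℝ | 0 < u ∧ u < T n ∧ b (u + d) - b u ≠ c (T n + d) - c (T n)} = 0 :=
      fun n => keydiff_b a b c d (T n) (hT2 n) (hT3 n) (hT4 n) hd
    apply measure_mono_null _ (measure_iUnion_null hVn)
    intro u hu
    obtain ⟨n, hn⟩ := exists_nat_gt u
    refine mem_iUnion.2 ⟨n, hu.1, lt_trans hn (hT1 n), ?_⟩
    have hv : φ d = c (T n + d) - c (T n) := hφeq d (T n) hd (hT2 n) (hT3 n) (hT4 n)
    intro hcon
    apply hu.2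
    rw [← hv] at hcon
    linarith
  have hadiff : ∀ d : ℝ, 0 < d → volume {u : ℝ | 0 < u ∧ a (u + d) ≠ a u + φ d} = 0 := by
    intro d hd
    choose T hT1 hT2 hT3 hT4 using fun n : ℕ => hpick (n : ℝ) d hd
    have hVn : ∀ n : ℕ,
        volume {u : ℝ | 0 < u ∧ u < T n ∧ a (u + d) - a u ≠ c (T n + d) - c (T n)} = 0 :=
      fun n => keydiff_a a b c d (T n) (hT2 n) (hT3 n) (hT4 n) hd
    apply measure_mono_null _ (measure_iUnion_null hVn)
    intro u hu
    obtain ⟨n, hn⟩ := exists_nat_gt u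
    refine mem_iUnion.2 ⟨n, hu.1, lt_trans hn (hT1 n), ?_⟩
    have hv : φ d = c (T n + d) - c (T n) := hφeq d (T n) hd (hT2 n) (hT3 n) (hT4 n)
    intro hcon
    apply hu.2
    rw [← hv] at hcon
    linarith
  -- φ is additive
  have haddφ : ∀ d e : ℝ, 0 < d → 0 < e → φ (d + e) = φ d + φ e := by
    intro d e hd he
    have h1 := hbdiff d hd
    have h2 := hbdiff e he
    have h3 := hbdiff (d + e) (by linarith)
    have h4 : volume ((fun u : ℝ => u + d) ⁻¹' {u : ℝ | 0 < u ∧ b (u + e) ≠ b u + φ e}) = 0 :=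
      null_preimage_add_right _ h2 d
    obtain ⟨u, hu1, _, hu3⟩ := pick_avoid 0 1 one_pos _
      (measure_union_null (measure_union_null h1 h3) h4)
    simp only [mem_union, not_or, mem_preimage, mem_setOf_eq,
      not_and_or] at hu3
    obtain ⟨⟨e1, e2⟩, e3⟩ := hu3
    have q1 : b (u + d) = b u + φ d := by
      rcases e1 with h | h
      · exact absurd hu1 h
      · exact not_not.1 h
    have q2 : b (u + (d + e)) = b u + φ (d + e) := by
      rcases e2 with h | h
      · exact absurd hu1 h
      · exact not_not.1 h
    have q3 : b (u + d + e) = b (u + d) + φ e := by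
      rcases e3 with h | h
      · exact absurd (by linarith : 0 < u + d) h
      · exact not_not.1 h
    have hr : u + (d + e) = u + d + e := by ring
    rw [hr] at q2
    linarith
  -- φ agrees a.e. with a measurable function
  obtain ⟨s0, hs01, hs00, hs0P, _⟩ := hpick 1 1 one_pos
  have hgmeas : Measurable fun d : ℝ => c (s0 + d) - c s0 :=
    (hc.comp (measurable_id.const_add s0)).sub measurable_const
  have haeφ : ∀ᵐ d : ℝ ∂volume, 0 < d → φ d = c (s0 + d) - c s0 := by
    rw [ae_iff]
    apply measure_mono_null _ (null_preimage_add_left {s : ℝ | ¬ P s} hZ0 s0)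
    intro d hd
    simp only [mem_setOf_eq, Classical.not_imp] at hd
    obtain ⟨hd0, hdne⟩ := hd
    simp only [mem_preimage, mem_setOf_eq]
    intro hPs0d
    exact hdne (hφeq d s0 hd0 hs00 hs0P hPs0d)
  obtain ⟨lam, hlam⟩ := phi_linear φ _ hgmeas haddφ haeφ
  -- b and a are affine a.e.
  have hbdiff' : ∀ d : ℝ, 0 < d → volume {u : ℝ | 0 < u ∧ b (u + d) ≠ b u + lam * d} = 0 := by
    intro d hd
    have := hbdiff d hd
    rwa [hlam d hd] at this
  have hadiff' : ∀ d : ℝ, 0 < d → volume {u : ℝ | 0 < u ∧ a (u + d) ≠ a u + lam * d} = 0 := by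
    intro d hd
    have := hadiff d hd
    rwa [hlam d hd] at this
  obtain ⟨β, hβ⟩ := affine_of_diff b hb lam hbdiff'
  obtain ⟨α, hα⟩ := affine_of_diff a ha lam hadiff'
  -- c is affine a.e.
  have hZa : volume {x : ℝ | ¬ (0 < x → a x = lam * x + α)} = 0 := by
    rw [← ae_iff]; exact hα
  have hZb : volume {x : ℝ | ¬ (0 < x → b x = lam * x + β)} = 0 := by
    rw [← ae_iff]; exact hβ
  have hcaff : ∀ᵐ s : ℝ ∂volume, 0 < s → c s = lam * s + α + β := by
    filter_upwards [hGood] with s hPs hs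
    have hZb' : volume ((fun x : ℝ => s - x) ⁻¹' {x : ℝ | ¬ (0 < x → b x = lam * x + β)}) = 0 :=
      null_preimage_sub_left _ hZb s
    obtain ⟨x, hx1, hx2, hx3⟩ := pick_avoid 0 s hs _
      (measure_union_null (measure_union_null hPs hZa) hZb')
    simp only [mem_union, not_or, mem_preimage, mem_setOf_eq,
      not_and_or, Classical.not_imp, not_not] at hx3
    obtain ⟨⟨e1, e2⟩, e3⟩ := hx3
    have q1 : a x + b (s - x) = c s := by
      rcases e1 with h | h | h
      · exact absurd hx1 h
      · exact absurd hx2 h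
      · exact h
    have q2 : a x = lam * x + α := by
      rcases e2 with h | h
      · exact absurd hx1 h
      · exact h
    have q3 : b (s - x) = lam * (s - x) + β := by
      rcases e3 with h | h
      · exact absurd (by linarith : (0:ℝ) < s - x) h
      · exact h
    have hrw : lam * (s - x) = lam * s - lam * x := by ring
    rw [hrw] at q3
    linarith
  refine ⟨lam, α, β, ?_⟩
  filter_upwards [hα, hβ, hcaff] with x h1 h2 h3 hx
  rw [mem_Ioi] at hx
  exact ⟨h1 hx, h2 hx, h3 hx⟩
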